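/- Let n ≥ 7 and let t be an integer with 2 ≤ t ≤ ⌊(n−1)/2⌋ − 1, and set M := n − t − 2. Let F be a finite field of arbitrary characteristic, V a finite-dimensional F-vector space, and A_1,…,A_M, B_1,…,B_{t+1}, C subspaces of V. If at least one of the subspaces A_1,…,A_M, B_1,…,B_{t+1}, C is the zero subspace, then inequality (b) holds. -/

import Mathlib

open Finset

variable {F V : Type*} [Field F] [AddCommGroup V] [Module F V]

/-- `eH X` is the dimension of the subspace `X`, as an integer
(the "entropy" `H(X)` of the paper). -/
noncomputable def eH (X : Submodule F V) : ℤ := Module.finrank F X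

/-- Left-hand side of inequality (a):
`H(B_1,…,B_{t+1},A_{t+2},…,A_M) + (t+2)(M−t−1)·H(C)`. -/
noncomputable def lhsA (t M : ℕ) (A B : ℕ → Submodule F V) (C : Submodule F V) : ℤ :=
  eH ((∑ i ∈ Icc 1 (t+1), B i) + ∑ i ∈ Icc (t+2) M, A i)
    + ((t : ℤ) + 2) * ((M : ℤ) - t - 1) * eH C

/-- Right-hand side of inequality (a):
`(M−1)·I(A_1+⋯+A_M ; C) + (t+2)·Σ_{i=t+2}^{M} H(A_i)
 + ((t+2)(M−t)−1)·( H(C | A_1,…,A_M) + Σ_{i=1}^{M} I(Σ_{j≠i} A_j ; C) )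
 + Σ_{i=1}^{t+1} ( H(B_i | A_j : j≠i) + H(B_i | A_i, C)
      + I(A_1+⋯+A_i ; A_{i+1}+⋯+A_{t+1}) + I(A_1+⋯+A_{i−1} ; A_i) )`. -/
noncomputable def rhsA (t M : ℕ) (A B : ℕ → Submodule F V) (C : Submodule F V) : ℤ :=
  ((M : ℤ) - 1) * eH ((∑ i ∈ Icc 1 M, A i) ⊓ C)
  + ((t : ℤ) + 2) * ∑ i ∈ Icc (t+2) M, eH (A i)
  + (((t : ℤ) + 2) * ((M : ℤ) - t) - 1) *
      ((eH (C + ∑ i ∈ Icc 1 M, A i) - eH (∑ i ∈ Icc 1 M, A i))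
        + ∑ i ∈ Icc 1 M, eH ((∑ j ∈ (Icc 1 M).erase i, A j) ⊓ C))
  + ∑ i ∈ Icc 1 (t+1),
      ((eH (B i + ∑ j ∈ (Icc 1 M).erase i, A j) - eH (∑ j ∈ (Icc 1 M).erase i, A j))
        + (eH (B i + (A i + C)) - eH (A i + C))
        + eH ((∑ j ∈ Icc 1 i, A j) ⊓ (∑ j ∈ Icc (i+1) (t+1), A j))
        + eH ((∑ j ∈ Icc 1 (i-1), A j) ⊓ A i))

/-- Inequality (a) of the paper. -/
def IneqA (t M : ℕ) (A B : ℕ → Submodule F V) (C : Submodule F V) : Prop :=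
  lhsA t M A B C ≤ rhsA t M A B C

/-- Left-hand side of inequality (b): `M·H(C)`. -/
noncomputable def lhsB (t M : ℕ) (A B : ℕ → Submodule F V) (C : Submodule F V) : ℤ :=
  (M : ℤ) * eH C

/-- Right-hand side of the `M`-scaled inequality (b):
`H(B_1,…,B_{t+1},A_{t+2},…,A_M)
 + M·( H(C | A_1,…,A_M) + Σ_{i=1}^{M} I(Σ_{j≠i} A_j ; C)
    + Σ_{i=2}^{t+1} I(A_1+⋯+A_{i−1} ; A_i)
    + Σ_{i=1}^{t+1} ( H(C | A_i, B_i) + H(B_i | A_j : j≠i)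
        + I(A_1+⋯+A_i ; A_{i+1}+⋯+A_M) ) )`. -/
noncomputable def rhsB (t M : ℕ) (A B : ℕ → Submodule F V) (C : Submodule F V) : ℤ :=
  eH ((∑ i ∈ Icc 1 (t+1), B i) + ∑ i ∈ Icc (t+2) M, A i)
  + (M : ℤ) *
      ((eH (C + ∑ i ∈ Icc 1 M, A i) - eH (∑ i ∈ Icc 1 M, A i))
        + ∑ i ∈ Icc 1 M, eH ((∑ j ∈ (Icc 1 M).erase i, A j) ⊓ C)
        + ∑ i ∈ Icc 2 (t+1), eH ((∑ j ∈ Icc 1 (i-1), A j) ⊓ A i)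
        + ∑ i ∈ Icc 1 (t+1),
            ((eH (C + (A i + B i)) - eH (A i + B i))
              + (eH (B i + ∑ j ∈ (Icc 1 M).erase i, A j) - eH (∑ j ∈ (Icc 1 M).erase i, A j))
              + eH ((∑ j ∈ Icc 1 i, A j) ⊓ (∑ j ∈ Icc (i+1) M, A j))))

/-- Inequality (b) of the paper (in `M`-scaled form). -/
def IneqB (t M : ℕ) (A B : ℕ → Submodule F V) (C : Submodule F V) : Prop :=
  lhsB t M A B C ≤ rhsB t M A B C

section AuxLemmas

lemma eH_nonneg (X : Submodule F V) : 0 ≤ eH X := Int.natCast_nonneg _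

lemma eH_mono [FiniteDimensional F V] {X Y : Submodule F V} (h : X ≤ Y) :
    eH X ≤ eH Y := by
  unfold eH; exact_mod_cast Submodule.finrank_mono h

lemma eH_add_inf [FiniteDimensional F V] (X Y : Submodule F V) :
    eH (X + Y) + eH (X ⊓ Y) = eH X + eH Y := by
  unfold eH; rw [Submodule.add_eq_sup]
  exact_mod_cast Submodule.finrank_sup_add_finrank_inf_eq X Y

lemma eH_cond_nonneg [FiniteDimensional F V] (X Y : Submodule F V) :
    0 ≤ eH (X + Y) - eH Y := by
  have : Y ≤ X + Y := by rw [Submodule.add_eq_sup]; exact le_sup_right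
  have := eH_mono this
  linarith

end AuxLemmas

/-- If one of the subspaces `A_1,…,A_M, B_1,…,B_{t+1}, C` is the zero subspace,
then inequality (b) holds over any finite field, regardless of the
characteristic. -/
theorem ineqB_of_zero_subspace (n t M : ℕ) (hn : 7 ≤ n) (ht2 : 2 ≤ t)
    (ht : t ≤ (n - 1) / 2 - 1) (hM : M = n - t - 2)
    (F V : Type*) [Field F] [Fintype F] [AddCommGroup V] [Module F V]
    [FiniteDimensional F V]
    (A B : ℕ → Submodule F V) (C : Submodule F V)
    (hzero : (∃ i ∈ Icc 1 M, A i = ⊥) ∨ (∃ i ∈ Icc 1 (t+1), B i = ⊥) ∨ C = ⊥) :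
    IneqB t M A B C := by
  have htM : t + 1 ≤ M := by omega
  unfold IneqB lhsB rhsB
  -- nonnegativity of the pieces of the bracket
  have hsum1nn : ∀ i ∈ Icc 1 M, (0:ℤ) ≤ eH ((∑ j ∈ (Icc 1 M).erase i, A j) ⊓ C) :=
    fun i _ => eH_nonneg _
  have hsum2nn : (0:ℤ) ≤ ∑ i ∈ Icc 2 (t+1), eH ((∑ j ∈ Icc 1 (i-1), A j) ⊓ A i) :=
    Finset.sum_nonneg fun i _ => eH_nonneg _
  have hsum3nn : ∀ i ∈ Icc 1 (t+1), (0:ℤ) ≤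
      ((eH (C + (A i + B i)) - eH (A i + B i))
        + (eH (B i + ∑ j ∈ (Icc 1 M).erase i, A j) - eH (∑ j ∈ (Icc 1 M).erase i, A j))
        + eH ((∑ j ∈ Icc 1 i, A j) ⊓ (∑ j ∈ Icc (i+1) M, A j))) := by
    intro i _
    have h1 := eH_cond_nonneg C (A i + B i)
    have h2 := eH_cond_nonneg (B i) (∑ j ∈ (Icc 1 M).erase i, A j)
    have h3 := eH_nonneg ((∑ j ∈ Icc 1 i, A j) ⊓ (∑ j ∈ Icc (i+1) M, A j))
    linarith
  have hCS := eH_add_inf C (∑ i ∈ Icc 1 M, A i)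
  have hCSle : eH (C ⊓ ∑ i ∈ Icc 1 M, A i) ≤ eH C := eH_mono inf_le_left
  -- key inequality: eH C ≤ bracket
  have key : eH C ≤ (eH (C + ∑ i ∈ Icc 1 M, A i) - eH (∑ i ∈ Icc 1 M, A i))
      + ∑ i ∈ Icc 1 M, eH ((∑ j ∈ (Icc 1 M).erase i, A j) ⊓ C)
      + ∑ i ∈ Icc 2 (t+1), eH ((∑ j ∈ Icc 1 (i-1), A j) ⊓ A i)
      + ∑ i ∈ Icc 1 (t+1),
          ((eH (C + (A i + B i)) - eH (A i + B i))
            + (eH (B i + ∑ j ∈ (Icc 1 M).erase i, A j) - eH (∑ j ∈ (Icc 1 M).erase i, A j))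
            + eH ((∑ j ∈ Icc 1 i, A j) ⊓ (∑ j ∈ Icc (i+1) M, A j))) := by
    have hsum3 : (0:ℤ) ≤ ∑ i ∈ Icc 1 (t+1),
        ((eH (C + (A i + B i)) - eH (A i + B i))
          + (eH (B i + ∑ j ∈ (Icc 1 M).erase i, A j) - eH (∑ j ∈ (Icc 1 M).erase i, A j))
          + eH ((∑ j ∈ Icc 1 i, A j) ⊓ (∑ j ∈ Icc (i+1) M, A j))) :=
      Finset.sum_nonneg hsum3nn
    rcases hzero with ⟨k, hk, hAk⟩ | ⟨k, hk, hBk⟩ | hC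
    · -- some A_k = ⊥
      have hTk : (∑ j ∈ (Icc 1 M).erase k, A j) = ∑ i ∈ Icc 1 M, A i :=
        Finset.sum_erase _ (by rw [hAk]; rfl)
      have h1 : eH ((∑ j ∈ (Icc 1 M).erase k, A j) ⊓ C)
          ≤ ∑ i ∈ Icc 1 M, eH ((∑ j ∈ (Icc 1 M).erase i, A j) ⊓ C) :=
        Finset.single_le_sum hsum1nn hk
      have h2 : eH ((∑ j ∈ (Icc 1 M).erase k, A j) ⊓ C)
          = eH (C ⊓ ∑ i ∈ Icc 1 M, A i) := by rw [hTk, inf_comm]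
      linarith
    · -- some B_k = ⊥
      have hkM : k ∈ Icc 1 M := by
        simp only [mem_Icc] at hk ⊢; omega
      set i : ℕ := if k = 1 then 2 else 1 with hi
      have hiM : i ∈ Icc 1 M := by
        simp only [mem_Icc, hi]
        split <;> omega
      have hik : k ≠ i := by
        simp only [hi]; split <;> omega
      have hkTi : A k ≤ ∑ j ∈ (Icc 1 M).erase i, A j :=
        Finset.single_le_sum (fun j _ => zero_le)
          (Finset.mem_erase.mpr ⟨hik, hkM⟩)
      have hmono : eH (C ⊓ A k) ≤ eH ((∑ j ∈ (Icc 1 M).erase i, A j) ⊓ C) :=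
        eH_mono (le_inf (inf_le_right.trans hkTi) inf_le_left)
      have h1 : eH ((∑ j ∈ (Icc 1 M).erase i, A j) ⊓ C)
          ≤ ∑ i ∈ Icc 1 M, eH ((∑ j ∈ (Icc 1 M).erase i, A j) ⊓ C) :=
        Finset.single_le_sum hsum1nn hiM
      have h3 := Finset.single_le_sum hsum3nn hk
      have hAkBk : A k + B k = A k := by rw [hBk, Submodule.add_eq_sup, sup_bot_eq]
      rw [hAkBk] at h3
      have hak := eH_add_inf C (A k)
      have hnn2 := eH_cond_nonneg (B k) (∑ j ∈ (Icc 1 M).erase k, A j)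
      have hnn3 := eH_nonneg ((∑ j ∈ Icc 1 k, A j) ⊓ (∑ j ∈ Icc (k+1) M, A j))
      linarith
    · -- C = ⊥
      have hC0 : eH C = 0 := by rw [hC]; simp [eH]
      have h1 : (0:ℤ) ≤ ∑ i ∈ Icc 1 M, eH ((∑ j ∈ (Icc 1 M).erase i, A j) ⊓ C) :=
        Finset.sum_nonneg hsum1nn
      have h0 := eH_cond_nonneg C (∑ i ∈ Icc 1 M, A i)
      linarith
  have hBnn := eH_nonneg ((∑ i ∈ Icc 1 (t+1), B i) + ∑ i ∈ Icc (t+2) M, A i)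
  have hMnn : (0:ℤ) ≤ (M:ℤ) := Int.natCast_nonneg _
  have hmul := mul_le_mul_of_nonneg_left key hMnn
  linarith
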